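/- Let g be the real Lie algebra with basis e₁,...,e₆ and only nonzero brackets [e₁,e₂] = -e₅, [e₃,e₄] = -e₆ (the algebra h₂ = (0,0,0,0,12,34)). Then g is 2-step nilpotent, its centre equals its commutator subalgebra span{e₅,e₆}, and for every integrable complex structure J on g the subspace span{e₅,e₆} is J-invariant. -/

import Mathlib

set_option maxHeartbeats 1000000


/-- The 6-dimensional nilpotent Lie algebra `h₂ = (0,0,0,0,12,34)` (basis `e 0, …, e 5`,
nonzero brackets `[e 0, e 1] = -e 4`, `[e 2, e 3] = -e 5`) is 2-step nilpotent, its centre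
equals its commutator subalgebra `span {e 4, e 5}`, and this subspace is invariant under
every integrable complex structure. -/
theorem stmt_19 (g : Type*) [LieRing g] [LieAlgebra ℝ g]
    (e : Module.Basis (Fin 6) ℝ g)
    (h01 : ⁅e 0, e 1⁆ = -e 4) (h23 : ⁅e 2, e 3⁆ = -e 5)
    (hother : ∀ i j : Fin 6,
      ¬ ((i = 0 ∧ j = 1) ∨ (i = 1 ∧ j = 0) ∨ (i = 2 ∧ j = 3) ∨ (i = 3 ∧ j = 2)) →
      ⁅e i, e j⁆ = 0) :
    (∀ x y z : g, ⁅⁅x, y⁆, z⁆ = 0) ∧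
    (LieAlgebra.center ℝ g : Submodule ℝ g) = Submodule.span ℝ {e 4, e 5} ∧
    (LieAlgebra.derivedSeries ℝ g 1 : Submodule ℝ g) = Submodule.span ℝ {e 4, e 5} ∧
    ∀ J : g →ₗ[ℝ] g, J ∘ₗ J = -LinearMap.id →
      (∀ x y : g, ⁅x, y⁆ - ⁅J x, J y⁆ + J ⁅J x, y⁆ + J ⁅x, J y⁆ = 0) →
      ∀ v ∈ Submodule.span ℝ ({e 4, e 5} : Set g), J v ∈ Submodule.span ℝ ({e 4, e 5} : Set g) := by
  have h10 : ⁅e 1, e 0⁆ = e 4 := by rw [← lie_skew, h01]; simp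
  have h32 : ⁅e 3, e 2⁆ = e 5 := by rw [← lie_skew, h23]; simp
  have tbl : ∀ i j : Fin 6, ⁅e i, e j⁆ =
      (if i = 0 ∧ j = 1 then -e 4 else if i = 1 ∧ j = 0 then e 4
       else if i = 2 ∧ j = 3 then -e 5 else if i = 3 ∧ j = 2 then e 5 else 0) := by
    intro i j
    by_cases ha : i = 0 ∧ j = 1
    · simp [ha, h01]
    by_cases hb : i = 1 ∧ j = 0
    · simp [ha, hb, h10]
    by_cases hc : i = 2 ∧ j = 3
    · simp [ha, hb, hc, h23]
    by_cases hd : i = 3 ∧ j = 2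
    · simp [ha, hb, hc, hd, h32]
    · simp [ha, hb, hc, hd, hother i j (by tauto)]
  -- general bracket formula
  have key : ∀ x y : g, ⁅x, y⁆ =
      (e.repr x 1 * e.repr y 0 - e.repr x 0 * e.repr y 1) • e 4 +
      (e.repr x 3 * e.repr y 2 - e.repr x 2 * e.repr y 3) • e 5 := by
    intro x y
    nth_rewrite 1 [← e.sum_repr x, ← e.sum_repr y]
    rw [Fin.sum_univ_six, Fin.sum_univ_six]
    simp only [add_lie, lie_add, smul_lie, lie_smul, tbl]
    simp (config := { decide := true })
    module
  -- every bracket lies in the span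
  have hmem : ∀ x y : g, ⁅x, y⁆ ∈ Submodule.span ℝ ({e 4, e 5} : Set g) := by
    intro x y
    rw [key]
    exact add_mem (Submodule.smul_mem _ _ (Submodule.subset_span (by simp)))
      (Submodule.smul_mem _ _ (Submodule.subset_span (by simp)))
  -- e 4 and e 5 are central
  have he4r : ∀ z : g, ⁅z, e 4⁆ = 0 := by
    intro z; rw [key]; simp [Module.Basis.repr_self, Finsupp.single_apply]
  have he5r : ∀ z : g, ⁅z, e 5⁆ = 0 := by
    intro z; rw [key]; simp [Module.Basis.repr_self, Finsupp.single_apply]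
  -- any element of the span is central
  have hcent : ∀ v ∈ Submodule.span ℝ ({e 4, e 5} : Set g), ∀ z : g, ⁅z, v⁆ = 0 := by
    intro v hv z
    obtain ⟨a, b, hab⟩ := Submodule.mem_span_pair.mp hv
    rw [← hab, lie_add, lie_smul, lie_smul, he4r, he5r, smul_zero, smul_zero, add_zero]
  have hcent' : ∀ v ∈ Submodule.span ℝ ({e 4, e 5} : Set g), ∀ z : g, ⁅v, z⁆ = 0 := by
    intro v hv z
    rw [← lie_skew, hcent v hv z, neg_zero]
  -- 2-step nilpotency
  have two_step : ∀ x y z : g, ⁅⁅x, y⁆, z⁆ = 0 := fun x y z => hcent' _ (hmem x y) z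
  -- coordinate extraction
  have coord : ∀ (a b : ℝ), a • e 4 + b • e 5 = 0 → a = 0 ∧ b = 0 := by
    intro a b h
    have h4 := congrArg (fun w => e.repr w 4) h
    have h5 := congrArg (fun w => e.repr w 5) h
    simp [Module.Basis.repr_self, Finsupp.single_apply] at h4 h5
    exact ⟨h4, h5⟩
  -- the centre
  have hcenter : (LieAlgebra.center ℝ g : Submodule ℝ g) = Submodule.span ℝ {e 4, e 5} := by
    apply le_antisymm
    · intro m hm
      have hm' : ∀ x : g, ⁅x, m⁆ = 0 := by
        simp only [LieIdeal.toLieSubalgebra_toSubmodule, LieSubmodule.mem_toSubmodule,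
          LieModule.mem_maxTrivSubmodule] at hm
        exact hm
      have c0 : e.repr m 0 = 0 := by
        have h := hm' (e 1)
        rw [key] at h
        have h2 := (coord _ _ h).1
        simpa [Module.Basis.repr_self, Finsupp.single_apply] using h2
      have c1 : e.repr m 1 = 0 := by
        have h := hm' (e 0)
        rw [key] at h
        have h2 := (coord _ _ h).1
        simpa [Module.Basis.repr_self, Finsupp.single_apply, sub_eq_zero] using h2
      have c2 : e.repr m 2 = 0 := by
        have h := hm' (e 3)
        rw [key] at h
        have h2 := (coord _ _ h).2
        simpa [Module.Basis.repr_self, Finsupp.single_apply] using h2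
      have c3 : e.repr m 3 = 0 := by
        have h := hm' (e 2)
        rw [key] at h
        have h2 := (coord _ _ h).2
        simpa [Module.Basis.repr_self, Finsupp.single_apply, sub_eq_zero] using h2
      have hm2 : m = e.repr m 4 • e 4 + e.repr m 5 • e 5 := by
        conv_lhs => rw [← e.sum_repr m]
        rw [Fin.sum_univ_six, c0, c1, c2, c3]
        simp
      rw [hm2]
      exact add_mem (Submodule.smul_mem _ _ (Submodule.subset_span (by simp)))
        (Submodule.smul_mem _ _ (Submodule.subset_span (by simp)))
    · rw [Submodule.span_le]
      rintro v (rfl | rfl) <;>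
        · simp only [SetLike.mem_coe, LieIdeal.toLieSubalgebra_toSubmodule,
            LieSubmodule.mem_toSubmodule, LieModule.mem_maxTrivSubmodule]
          intro x
          first | exact he4r x | exact he5r x
  -- the derived series
  have hder : (LieAlgebra.derivedSeries ℝ g 1 : Submodule ℝ g) = Submodule.span ℝ {e 4, e 5} := by
    have h1 : LieAlgebra.derivedSeries ℝ g 1 = ⁅(⊤ : LieIdeal ℝ g), (⊤ : LieIdeal ℝ g)⁆ := by
      rw [LieAlgebra.derivedSeries_def, LieAlgebra.derivedSeriesOfIdeal_succ,
        LieAlgebra.derivedSeriesOfIdeal_zero]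
    rw [h1]
    rw [show ((⁅(⊤ : LieIdeal ℝ g), (⊤ : LieIdeal ℝ g)⁆ : LieIdeal ℝ g) : Submodule ℝ g) =
      LieSubmodule.toSubmodule (⁅(⊤ : LieIdeal ℝ g), (⊤ : LieIdeal ℝ g)⁆ : LieIdeal ℝ g) from rfl]
    rw [LieSubmodule.lieIdeal_oper_eq_linear_span']
    apply le_antisymm
    · rw [Submodule.span_le]
      rintro m ⟨x, -, y, -, rfl⟩
      exact hmem x y
    · rw [Submodule.span_le]
      rintro v (rfl | rfl)
      · exact Submodule.subset_span ⟨e 1, trivial, e 0, trivial, h10⟩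
      · exact Submodule.subset_span ⟨e 3, trivial, e 2, trivial, h32⟩
  refine ⟨two_step, hcenter, hder, ?_⟩
  -- the complex structure part
  intro J hJ2 hN
  have hJJ : ∀ v : g, J (J v) = -v := by
    intro v
    have := DFunLike.congr_fun hJ2 v
    simpa using this
  -- for z in the span, J⁅x, Jz⁆ = ⁅Jx, Jz⁆
  have star : ∀ (x z : g), z ∈ Submodule.span ℝ ({e 4, e 5} : Set g) →
      J ⁅x, J z⁆ = ⁅J x, J z⁆ := by
    intro x z hz
    have h := hN x z
    rw [hcent z hz x, hcent z hz (J x), map_zero, zero_sub, add_zero] at h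
    have h' : J ⁅x, J z⁆ - ⁅J x, J z⁆ = 0 := by rw [← h]; abel
    exact sub_eq_zero.mp h'
  by_cases hcase : ∀ x : g, ∀ z ∈ Submodule.span ℝ ({e 4, e 5} : Set g), ⁅x, J z⁆ = 0
  · -- J of every element of the span is central, hence in the span
    intro v hv
    rw [← hcenter]
    simp only [SetLike.mem_coe, LieIdeal.toLieSubalgebra_toSubmodule,
      LieSubmodule.mem_toSubmodule, LieModule.mem_maxTrivSubmodule]
    exact fun x => hcase x v hv
  · push_neg at hcase
    obtain ⟨x, z, hz, hu0⟩ := hcase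
    obtain ⟨u, hudef⟩ : ∃ u : g, u = ⁅x, J z⁆ := ⟨_, rfl⟩
    have hu : u ≠ 0 := by rw [hudef]; exact hu0
    have hu1 : u ∈ Submodule.span ℝ ({e 4, e 5} : Set g) := by rw [hudef]; exact hmem _ _
    have hu2 : J u ∈ Submodule.span ℝ ({e 4, e 5} : Set g) := by
      rw [hudef, star x z hz]; exact hmem _ _
    obtain ⟨a, b, hab⟩ := Submodule.mem_span_pair.mp hu1
    obtain ⟨p, q, hpq⟩ := Submodule.mem_span_pair.mp hu2
    have hΔ : a * q - b * p ≠ 0 := by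
      intro hΔ0
      -- then J u is proportional to u, contradicting J² = -1
      have e1 : a • J u = p • u := by
        have h : a • J u - p • u = (a * q - b * p) • e 5 := by
          rw [← hpq, ← hab]; module
        rw [hΔ0, zero_smul] at h
        exact sub_eq_zero.mp h
      have eb1 : b • J u = q • u := by
        have h : b • J u - q • u = (b * p - a * q) • e 4 := by
          rw [← hpq, ← hab]; module
        have : b * p - a * q = 0 := by linarith
        rw [this, zero_smul] at h
        exact sub_eq_zero.mp h
      have e2 : p • J u = -(a • u) := by
        have h := congrArg J e1
        rw [map_smul, map_smul, hJJ] at h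
        rw [← h]; module
      have eb2 : q • J u = -(b • u) := by
        have h := congrArg J eb1
        rw [map_smul, map_smul, hJJ] at h
        rw [← h]; module
      have ka : (p * p + a * a) • u = 0 := by
        have c1 : (p * p) • u = p • (a • J u) := by rw [e1]; module
        have c2 : p • (a • J u) = a • (p • J u) := by module
        rw [e2] at c2
        rw [c2] at c1
        rw [add_smul, c1]; module
      have kb : (q * q + b * b) • u = 0 := by
        have c1 : (q * q) • u = q • (b • J u) := by rw [eb1]; module
        have c2 : q • (b • J u) = b • (q • J u) := by module
        rw [eb2] at c2
        rw [c2] at c1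
        rw [add_smul, c1]; module
      have ha0 : p * p + a * a = 0 := by
        rcases smul_eq_zero.mp ka with h | h
        · exact h
        · exact absurd h hu
      have hb0 : q * q + b * b = 0 := by
        rcases smul_eq_zero.mp kb with h | h
        · exact h
        · exact absurd h hu
      have ha : a = 0 := by nlinarith [sq_nonneg a, sq_nonneg p]
      have hb : b = 0 := by nlinarith [sq_nonneg b, sq_nonneg q]
      apply hu
      rw [← hab, ha, hb, zero_smul, zero_smul, add_zero]
    set Δ : ℝ := a * q - b * p with hΔdef
    have h4 : Δ • e 4 = q • u - b • J u := by rw [← hpq, ← hab]; module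
    have h5 : Δ • e 5 = a • J u - p • u := by rw [← hpq, ← hab]; module
    have hJe4 : J (e 4) ∈ Submodule.span ℝ ({e 4, e 5} : Set g) := by
      have : e 4 = Δ⁻¹ • (q • u - b • J u) := by
        rw [← h4, smul_smul, inv_mul_cancel₀ hΔ, one_smul]
      have hmemJ : J (Δ⁻¹ • (q • u - b • J u)) ∈ Submodule.span ℝ ({e 4, e 5} : Set g) := by
        rw [map_smul, map_sub, map_smul, map_smul, hJJ]
        exact Submodule.smul_mem _ _ (sub_mem (Submodule.smul_mem _ _ hu2)
          (Submodule.smul_mem _ _ (neg_mem hu1)))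
      rwa [← this] at hmemJ
    have hJe5 : J (e 5) ∈ Submodule.span ℝ ({e 4, e 5} : Set g) := by
      have : e 5 = Δ⁻¹ • (a • J u - p • u) := by
        rw [← h5, smul_smul, inv_mul_cancel₀ hΔ, one_smul]
      have hmemJ : J (Δ⁻¹ • (a • J u - p • u)) ∈ Submodule.span ℝ ({e 4, e 5} : Set g) := by
        rw [map_smul, map_sub, map_smul, map_smul, hJJ]
        exact Submodule.smul_mem _ _ (sub_mem (Submodule.smul_mem _ _ (neg_mem hu1))
          (Submodule.smul_mem _ _ hu2))
      rwa [← this] at hmemJ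
    intro v hv
    obtain ⟨s, t, hst⟩ := Submodule.mem_span_pair.mp hv
    rw [← hst, map_add, map_smul, map_smul]
    exact add_mem (Submodule.smul_mem _ _ hJe4) (Submodule.smul_mem _ _ hJe5)
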